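/- For ν a nonnegative integer, the polynomial P(R) = (β/(ν+2))R^{ν+3} − E·R + s² admits the factorization P(R) = (R − R₁)(R − R₂)Ψ(R), where Ψ(R) = (β/((ν+2)(R₂−R₁)))·Σ_{k=0}^{ν+1} R^{ν+1−k}(R₂^{k+1} − R₁^{k+1}), provided R₁ ≠ R₂ are two distinct positive roots of P. -/
import Mathlib

lemma keylem (R x : ℝ) (ν : ℕ) :
    (∑ k ∈ Finset.range (ν + 2), R ^ (ν + 1 - k) * x ^ (k + 1)) * (x - R)
      = x ^ (ν + 3) - x * R ^ (ν + 2) := by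
  have h : (∑ k ∈ Finset.range (ν + 2), R ^ (ν + 1 - k) * x ^ (k + 1))
      = x * ∑ k ∈ Finset.range (ν + 2), x ^ k * R ^ (ν + 2 - 1 - k) := by
    rw [Finset.mul_sum]
    refine Finset.sum_congr rfl fun k hk => ?_
    have : ν + 2 - 1 - k = ν + 1 - k := by omega
    rw [this, pow_succ]
    ring
  rw [h, mul_assoc, geom_sum₂_mul]
  ring


/-- factorization P(R) = (R − R₁)(R − R₂)Ψ(R) with
Ψ(R) = (β/((ν+2)(R₂−R₁)))·Σ_{k=0}^{ν+1} R^{ν+1−k}(R₂^{k+1} − R₁^{k+1}),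
where R₁ ≠ R₂ are two distinct positive roots of P. -/
theorem stmt1 (β s R₁ R₂ : ℝ) (ν : ℕ) (hβ : 0 < β) (hs : s ≠ 0)
    (hR₁ : 0 < R₁) (hR₂ : 0 < R₂) (hne : R₁ ≠ R₂)
    (E : ℝ) (hE : E = s ^ 2 / R₁ + β / ((ν : ℝ) + 2) * R₁ ^ (ν + 2))
    (P : ℝ → ℝ) (hP : ∀ R, P R = β / ((ν : ℝ) + 2) * R ^ (ν + 3) - E * R + s ^ 2)
    (hroot₁ : P R₁ = 0) (hroot₂ : P R₂ = 0)
    (Ψ : ℝ → ℝ)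
    (hΨ : ∀ R, Ψ R = β / (((ν : ℝ) + 2) * (R₂ - R₁)) *
      ∑ k ∈ Finset.range (ν + 2), R ^ (ν + 1 - k) * (R₂ ^ (k + 1) - R₁ ^ (k + 1))) :
    ∀ R, P R = (R - R₁) * (R - R₂) * Ψ R := by
  have hν : ((ν : ℝ) + 2) ≠ 0 := by positivity
  have hsub : R₂ - R₁ ≠ 0 := sub_ne_zero.mpr (Ne.symm hne)
  have h1 : β * R₁ ^ (ν + 3) - ((ν : ℝ) + 2) * (E * R₁) + ((ν : ℝ) + 2) * s ^ 2 = 0 := by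
    have h := hroot₁; rw [hP] at h
    field_simp at h
    linarith
  have h2 : β * R₂ ^ (ν + 3) - ((ν : ℝ) + 2) * (E * R₂) + ((ν : ℝ) + 2) * s ^ 2 = 0 := by
    have h := hroot₂; rw [hP] at h
    field_simp at h
    linarith
  intro R
  have hsplit : (∑ k ∈ Finset.range (ν + 2), R ^ (ν + 1 - k) * (R₂ ^ (k + 1) - R₁ ^ (k + 1)))
      = (∑ k ∈ Finset.range (ν + 2), R ^ (ν + 1 - k) * R₂ ^ (k + 1))
        - (∑ k ∈ Finset.range (ν + 2), R ^ (ν + 1 - k) * R₁ ^ (k + 1)) := by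
    rw [← Finset.sum_sub_distrib]
    exact Finset.sum_congr rfl fun k _ => by ring
  have key₁ := keylem R R₁ ν
  have key₂ := keylem R R₂ ν
  rw [hP, hΨ, hsplit]
  set S₁ := ∑ k ∈ Finset.range (ν + 2), R ^ (ν + 1 - k) * R₁ ^ (k + 1) with hS₁
  set S₂ := ∑ k ∈ Finset.range (ν + 2), R ^ (ν + 1 - k) * R₂ ^ (k + 1) with hS₂
  have hD : ((ν : ℝ) + 2) * (R₂ - R₁) ≠ 0 := mul_ne_zero hν hsub
  have hinv : ((ν : ℝ) + 2) * ((ν : ℝ) + 2)⁻¹ = 1 := mul_inv_cancel₀ hν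
  have hΨR : (β / (((ν : ℝ) + 2) * (R₂ - R₁)) * (S₂ - S₁)) * (((ν : ℝ) + 2) * (R₂ - R₁))
      = β * (S₂ - S₁) := by
    field_simp
  apply mul_right_cancel₀ hD
  rw [show (R - R₁) * (R - R₂) * (β / (((ν : ℝ) + 2) * (R₂ - R₁)) * (S₂ - S₁)) *
      (((ν : ℝ) + 2) * (R₂ - R₁)) = (R - R₁) * (R - R₂) *
      ((β / (((ν : ℝ) + 2) * (R₂ - R₁)) * (S₂ - S₁)) * (((ν : ℝ) + 2) * (R₂ - R₁))) from by ring,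
    hΨR]
  rw [div_eq_mul_inv]
  linear_combination (β * R ^ (ν + 3) * (R₂ - R₁)) * hinv +
    (β * (R - R₁)) * key₂ - (β * (R - R₂)) * key₁ + (R - R₁) * h2 - (R - R₂) * h1
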